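/- arXiv:1912.08942 — 2 statements merged into one kernel-verified Lean document; each statement's English description precedes it below -/
import Mathlib

section
/- Let v : Ω → ℝ be measurable with v(x) > 0 for a.e. x ∈ Ω, and assume that x ↦ h(x)·v(x)^(1−γ) is integrable on Ω. Define Γ : (0, ∞) → ℝ by Γ(t) = ∫_Ω h(x)·g(t·v(x))^(1−γ) dx. Then Γ is continuously differentiable on (0, ∞), and for every t > 0 its derivative is Γ'(t) = (1 − γ)·∫_Ω h(x)·g(t·v(x))^(−γ)·g'(t·v(x))·v(x) dx. -/
open MeasureTheory Real Set

private lemma g_deriv_eq {g : ℝ → ℝ}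
    (hg : ∀ t : ℝ, HasDerivAt g ((1 + 2 * g t ^ 2) ^ (-(1 / 2) : ℝ)) t) :
    deriv g = fun t => (1 + 2 * g t ^ 2) ^ (-(1 / 2) : ℝ) :=
  funext fun t => (hg t).deriv

private lemma gd_pos' {g : ℝ → ℝ} (t : ℝ) : (0:ℝ) < (1 + 2 * g t ^ 2) ^ (-(1 / 2) : ℝ) := by
  apply Real.rpow_pos_of_pos; positivity

private lemma g_mono {g : ℝ → ℝ}
    (hg : ∀ t : ℝ, HasDerivAt g ((1 + 2 * g t ^ 2) ^ (-(1 / 2) : ℝ)) t) :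
    StrictMono g := by
  apply strictMono_of_deriv_pos
  intro t
  rw [(hg t).deriv]
  exact gd_pos' t

private lemma g_cont {g : ℝ → ℝ}
    (hg : ∀ t : ℝ, HasDerivAt g ((1 + 2 * g t ^ 2) ^ (-(1 / 2) : ℝ)) t) :
    Continuous g :=
  continuous_iff_continuousAt.2 fun t => (hg t).continuousAt

private lemma g_pos {g : ℝ → ℝ} (hg0 : g 0 = 0)
    (hg : ∀ t : ℝ, HasDerivAt g ((1 + 2 * g t ^ 2) ^ (-(1 / 2) : ℝ)) t)
    {t : ℝ} (ht : 0 < t) : 0 < g t := by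
  have := (g_mono hg) ht
  rwa [hg0] at this

private lemma gd_anti {g : ℝ → ℝ} (hg0 : g 0 = 0)
    (hg : ∀ t : ℝ, HasDerivAt g ((1 + 2 * g t ^ 2) ^ (-(1 / 2) : ℝ)) t) :
    AntitoneOn (deriv g) (Set.Ici 0) := by
  intro x hx y hy hxy
  rw [(hg x).deriv, (hg y).deriv]
  have h1 : g x ≤ g y := (g_mono hg).monotone hxy
  have h0 : 0 ≤ g x := by
    have := (g_mono hg).monotone (hx : (0:ℝ) ≤ x); rwa [hg0] at this
  have hb : 1 + 2 * g x ^ 2 ≤ 1 + 2 * g y ^ 2 := by nlinarith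
  exact Real.rpow_le_rpow_of_nonpos (by positivity) hb (by norm_num)

private lemma g_concave {g : ℝ → ℝ} (hg0 : g 0 = 0)
    (hg : ∀ t : ℝ, HasDerivAt g ((1 + 2 * g t ^ 2) ^ (-(1 / 2) : ℝ)) t) :
    ConcaveOn ℝ (Set.Ici 0) g :=
  AntitoneOn.concaveOn_of_deriv (convex_Ici 0) (g_cont hg).continuousOn
    (fun x _ => (hg x).differentiableAt.differentiableWithinAt)
    ((gd_anti hg0 hg).mono interior_subset)

private lemma g_lin_lb {g : ℝ → ℝ} (hg0 : g 0 = 0)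
    (hg : ∀ t : ℝ, HasDerivAt g ((1 + 2 * g t ^ 2) ^ (-(1 / 2) : ℝ)) t)
    {u : ℝ} (hu : 0 ≤ u) (hu1 : u ≤ 1) : g 1 * u ≤ g u := by
  have hc := (g_concave hg0 hg).2 (Set.mem_Ici.2 (zero_le_one)) (Set.mem_Ici.2 le_rfl)
    hu (by linarith : (0:ℝ) ≤ 1 - u) (by ring)
  simp only [smul_eq_mul, hg0, mul_zero, mul_one, add_zero] at hc
  linarith [hc]

private lemma g_self_deriv_le {g : ℝ → ℝ} (hg0 : g 0 = 0)
    (hg : ∀ t : ℝ, HasDerivAt g ((1 + 2 * g t ^ 2) ^ (-(1 / 2) : ℝ)) t)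
    {u : ℝ} (hu : 0 ≤ u) : u * deriv g u ≤ g u := by
  rcases eq_or_lt_of_le hu with h | h
  · simp [← h, hg0]
  · obtain ⟨c, hc, hceq⟩ := exists_hasDerivAt_eq_slope g (deriv g) h
      (g_cont hg).continuousOn (fun x _ => by rw [(hg x).deriv]; exact hg x)
    have hgu : g u = u * deriv g c := by
      rw [hceq, hg0]
      field_simp
      ring
    have hle : deriv g u ≤ deriv g c :=
      gd_anti hg0 hg (Set.mem_Ici.2 hc.1.le) (Set.mem_Ici.2 hu) hc.2.le
    rw [hgu]
    nlinarith

private lemma g_rpow_le {g : ℝ → ℝ} (hg0 : g 0 = 0)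
    (hg : ∀ t : ℝ, HasDerivAt g ((1 + 2 * g t ^ 2) ^ (-(1 / 2) : ℝ)) t)
    {γ u : ℝ} (hγ : 1 < γ) (hu : 0 < u) :
    g u ^ (1 - γ) ≤ g 1 ^ (1 - γ) * (u ^ (1 - γ) + 1) := by
  have h1 : 0 < g 1 := g_pos hg0 hg one_pos
  have hgp : 0 < g u := g_pos hg0 hg hu
  rcases le_or_gt u 1 with hle | hlt
  · have hl : g 1 * u ≤ g u := g_lin_lb hg0 hg hu.le hle
    have h2 : g u ^ (1 - γ) ≤ (g 1 * u) ^ (1 - γ) :=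
      Real.rpow_le_rpow_of_nonpos (by positivity) hl (by linarith)
    have h3 : (g 1 * u) ^ (1 - γ) = g 1 ^ (1 - γ) * u ^ (1 - γ) :=
      Real.mul_rpow h1.le hu.le
    nlinarith [Real.rpow_pos_of_pos h1 (1 - γ)]
  · have hl : g 1 ≤ g u := (g_mono hg).monotone hlt.le
    have h2 : g u ^ (1 - γ) ≤ g 1 ^ (1 - γ) :=
      Real.rpow_le_rpow_of_nonpos h1 hl (by linarith)
    nlinarith [Real.rpow_pos_of_pos hu (1 - γ), Real.rpow_pos_of_pos h1 (1 - γ)]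

private lemma gF_le {g : ℝ → ℝ} (hg0 : g 0 = 0)
    (hg : ∀ t : ℝ, HasDerivAt g ((1 + 2 * g t ^ 2) ^ (-(1 / 2) : ℝ)) t)
    {γ a s w : ℝ} (hγ : 1 < γ) (ha : 0 < a) (has : a ≤ s) (hw : 0 < w) :
    g (s * w) ^ (-γ) * deriv g (s * w) * w
      ≤ a⁻¹ * (g 1 ^ (1 - γ) * ((a * w) ^ (1 - γ) + 1)) := by
  have haw : 0 < a * w := by positivity
  have hsw : a * w ≤ s * w := by nlinarith
  have hgaw : 0 < g (a * w) := g_pos hg0 hg haw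
  have hgsw : 0 < g (s * w) := g_pos hg0 hg (lt_of_lt_of_le haw hsw)
  have h2 : g (s * w) ^ (-γ) ≤ g (a * w) ^ (-γ) :=
    Real.rpow_le_rpow_of_nonpos hgaw ((g_mono hg).monotone hsw) (by linarith)
  have h3 : deriv g (s * w) ≤ deriv g (a * w) :=
    gd_anti hg0 hg (Set.mem_Ici.2 haw.le) (Set.mem_Ici.2 (haw.le.trans hsw)) hsw
  have h4 : 0 < deriv g (s * w) := by rw [(hg _).deriv]; exact gd_pos' _
  have h5 : 0 < deriv g (a * w) := by rw [(hg _).deriv]; exact gd_pos' _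
  have step1 : g (s * w) ^ (-γ) * deriv g (s * w) * w
      ≤ g (a * w) ^ (-γ) * deriv g (a * w) * w := by
    have := mul_le_mul h2 h3 h4.le (Real.rpow_pos_of_pos hgaw (-γ)).le
    exact mul_le_mul_of_nonneg_right this hw.le
  have step3 : (a * w) * deriv g (a * w) ≤ g (a * w) := g_self_deriv_le hg0 hg haw.le
  have step4 : g (a * w) ^ (-γ) * deriv g (a * w) * w
      = a⁻¹ * (g (a * w) ^ (-γ) * ((a * w) * deriv g (a * w))) := by
    field_simp
  have step5 : g (a * w) ^ (-γ) * ((a * w) * deriv g (a * w))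
      ≤ g (a * w) ^ (-γ) * g (a * w) :=
    mul_le_mul_of_nonneg_left step3 (Real.rpow_pos_of_pos hgaw (-γ)).le
  have step6 : g (a * w) ^ (-γ) * g (a * w) = g (a * w) ^ (1 - γ) := by
    rw [show (1 - γ : ℝ) = -γ + 1 by ring, Real.rpow_add hgaw, Real.rpow_one]
  have step7 : g (a * w) ^ (1 - γ) ≤ g 1 ^ (1 - γ) * ((a * w) ^ (1 - γ) + 1) :=
    g_rpow_le hg0 hg hγ haw
  calc g (s * w) ^ (-γ) * deriv g (s * w) * w
      ≤ g (a * w) ^ (-γ) * deriv g (a * w) * w := step1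
    _ = a⁻¹ * (g (a * w) ^ (-γ) * ((a * w) * deriv g (a * w))) := step4
    _ ≤ a⁻¹ * (g (a * w) ^ (1 - γ)) := by
        rw [← step6]
        exact mul_le_mul_of_nonneg_left step5 (by positivity)
    _ ≤ a⁻¹ * (g 1 ^ (1 - γ) * ((a * w) ^ (1 - γ) + 1)) :=
        mul_le_mul_of_nonneg_left step7 (by positivity)

/-- the map `Γ(t) = ∫_Ω h(x) g(t v(x))^(1−γ) dx` is `C¹` on
`(0,∞)` with `Γ'(t) = (1−γ) ∫_Ω h(x) g(t v(x))^(−γ) g'(t v(x)) v(x) dx`. -/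
theorem stmt_14 (N : ℕ) (hN : 3 ≤ N)
    (Ω : Set (EuclideanSpace ℝ (Fin N))) (hΩo : IsOpen Ω)
    (hΩb : Bornology.IsBounded Ω) (hΩpos : 0 < volume Ω)
    (γ : ℝ) (hγ : 1 < γ)
    (g : ℝ → ℝ) (hg0 : g 0 = 0)
    (hg : ∀ t : ℝ, HasDerivAt g ((1 + 2 * g t ^ 2) ^ (-(1 / 2) : ℝ)) t)
    (h : EuclideanSpace ℝ (Fin N) → ℝ)
    (hh_int : IntegrableOn h Ω)
    (hh_pos : ∀ᵐ x ∂(volume.restrict Ω), 0 < h x)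
    (v : EuclideanSpace ℝ (Fin N) → ℝ)
    (hv_meas : AEMeasurable v (volume.restrict Ω))
    (hv_pos : ∀ᵐ x ∂(volume.restrict Ω), 0 < v x)
    (hv_int : IntegrableOn (fun x => h x * v x ^ (1 - γ)) Ω) :
    (∀ t : ℝ, 0 < t →
      HasDerivAt (fun s : ℝ => ∫ x in Ω, h x * g (s * v x) ^ (1 - γ))
        ((1 - γ) * ∫ x in Ω, h x * g (t * v x) ^ (-γ) * deriv g (t * v x) * v x)
        t) ∧
    ContinuousOn
      (fun t : ℝ =>
        (1 - γ) * ∫ x in Ω, h x * g (t * v x) ^ (-γ) * deriv g (t * v x) * v x)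
      (Set.Ioi (0 : ℝ)) := by
  set μ := volume.restrict Ω with hμ
  -- continuity of deriv g
  have hdg_cont : Continuous (deriv g) := by
    rw [g_deriv_eq hg]
    exact (continuous_const.add (continuous_const.mul ((g_cont hg).pow 2))).rpow_const
      (fun x => Or.inl (by positivity : (1 + 2 * g x ^ 2 : ℝ) ≠ 0))
  -- a.e.-measurability of rpow of g(s v x)
  have hrp : ∀ (s c : ℝ), 0 < s → AEMeasurable (fun x => g (s * v x) ^ c) μ := by
    intro s c hs
    have hgm : AEMeasurable (fun x => g (s * v x)) μ :=
      (g_cont hg).measurable.comp_aemeasurable (hv_meas.const_mul s)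
    have hpos : ∀ᵐ x ∂μ, 0 < g (s * v x) :=
      hv_pos.mono fun x hx => g_pos hg0 hg (by positivity)
    refine AEMeasurable.congr
      (Real.continuous_exp.measurable.comp_aemeasurable
        ((Real.measurable_log.comp_aemeasurable hgm).mul_const c)) ?_
    filter_upwards [hpos] with x hx
    exact (Real.rpow_def_of_pos hx c).symm
  have meas1 : ∀ s : ℝ, 0 < s →
      AEStronglyMeasurable (fun x => h x * g (s * v x) ^ (1 - γ)) μ := fun s hs =>
    hh_int.aestronglyMeasurable.mul (hrp s (1 - γ) hs).aestronglyMeasurable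
  have meas2 : ∀ s : ℝ, 0 < s →
      AEStronglyMeasurable (fun x => h x * g (s * v x) ^ (-γ) * deriv g (s * v x) * v x) μ := by
    intro s hs
    exact ((hh_int.aestronglyMeasurable.mul (hrp s (-γ) hs).aestronglyMeasurable).mul
      ((hdg_cont.measurable.comp_aemeasurable (hv_meas.const_mul s)).aestronglyMeasurable)).mul
      hv_meas.aestronglyMeasurable
  have key : ∀ t : ℝ, 0 < t →
      (HasDerivAt (fun s : ℝ => ∫ x in Ω, h x * g (s * v x) ^ (1 - γ))
        ((1 - γ) * ∫ x in Ω, h x * g (t * v x) ^ (-γ) * deriv g (t * v x) * v x) t) ∧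
      ContinuousAt
        (fun s : ℝ => ∫ x in Ω, h x * g (s * v x) ^ (-γ) * deriv g (s * v x) * v x) t := by
    intro t ht
    set a : ℝ := t / 2 with ha_def
    have ha : 0 < a := by positivity
    -- membership in the ball gives a < s
    have hball : ∀ s : ℝ, s ∈ Metric.ball t a → a < s := by
      intro s hs
      rw [Metric.mem_ball, Real.dist_eq, abs_lt] at hs
      have := hs.1
      rw [ha_def] at *
      linarith
    -- the common bound
    set bnd : EuclideanSpace ℝ (Fin N) → ℝ :=
      fun x => a⁻¹ * g 1 ^ (1 - γ) * (a ^ (1 - γ) * (h x * v x ^ (1 - γ)) + h x) with hbnd_def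
    have hbnd_int : Integrable bnd μ :=
      ((hv_int.const_mul (a ^ (1 - γ))).add hh_int).const_mul (a⁻¹ * g 1 ^ (1 - γ))
    have hbnd : ∀ᵐ x ∂μ, ∀ s ∈ Metric.ball t a,
        |h x * g (s * v x) ^ (-γ) * deriv g (s * v x) * v x| ≤ bnd x := by
      filter_upwards [hh_pos, hv_pos] with x hx hw
      intro s hs
      have hsa : a < s := hball s hs
      have hsv : 0 < s * v x := mul_pos (ha.trans hsa) hw
      have hgsv : 0 < g (s * v x) := g_pos hg0 hg hsv
      have hd : 0 < deriv g (s * v x) := by rw [(hg _).deriv]; exact gd_pos' _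
      have hPpos : 0 < h x * g (s * v x) ^ (-γ) * deriv g (s * v x) * v x := by
        have h1 := Real.rpow_pos_of_pos hgsv (-γ)
        exact mul_pos (mul_pos (mul_pos hx h1) hd) hw
      rw [abs_of_pos hPpos]
      have hQ := gF_le hg0 hg hγ ha hsa.le hw
      calc h x * g (s * v x) ^ (-γ) * deriv g (s * v x) * v x
          = h x * (g (s * v x) ^ (-γ) * deriv g (s * v x) * v x) := by ring
        _ ≤ h x * (a⁻¹ * (g 1 ^ (1 - γ) * ((a * v x) ^ (1 - γ) + 1))) :=
            mul_le_mul_of_nonneg_left hQ hx.le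
        _ = bnd x := by
            rw [hbnd_def]
            rw [Real.mul_rpow ha.le hw.le]
            ring
    -- integrability of the value integrand at t
    have hF_int : Integrable (fun x => h x * g (t * v x) ^ (1 - γ)) μ := by
      refine Integrable.mono'
        (((hv_int.const_mul (t ^ (1 - γ))).add hh_int).const_mul (g 1 ^ (1 - γ)))
        (meas1 t ht) ?_
      filter_upwards [hh_pos, hv_pos] with x hx hw
      have htv : 0 < t * v x := by positivity
      have hgtv : 0 < g (t * v x) := g_pos hg0 hg htv
      have hP : 0 < h x * g (t * v x) ^ (1 - γ) :=
        mul_pos hx (Real.rpow_pos_of_pos hgtv (1 - γ))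
      rw [Real.norm_eq_abs, abs_of_pos hP]
      have h2 := g_rpow_le hg0 hg hγ htv
      calc h x * g (t * v x) ^ (1 - γ)
          ≤ h x * (g 1 ^ (1 - γ) * ((t * v x) ^ (1 - γ) + 1)) :=
            mul_le_mul_of_nonneg_left h2 hx.le
        _ = g 1 ^ (1 - γ) * (t ^ (1 - γ) * (h x * v x ^ (1 - γ)) + h x) := by
            rw [Real.mul_rpow ht.le hw.le]
            ring
    -- the pointwise derivative condition
    have h_diff : ∀ᵐ x ∂μ, ∀ s ∈ Metric.ball t a,
        HasDerivAt (fun s : ℝ => h x * g (s * v x) ^ (1 - γ))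
          ((1 - γ) * (h x * g (s * v x) ^ (-γ) * deriv g (s * v x) * v x)) s := by
      filter_upwards [hv_pos] with x hw
      intro s hs
      have hsa : a < s := hball s hs
      have hsv : 0 < s * v x := mul_pos (ha.trans hsa) hw
      have hgsv : 0 < g (s * v x) := g_pos hg0 hg hsv
      have d1 : HasDerivAt (fun s : ℝ => s * v x) (v x) s := hasDerivAt_mul_const (v x)
      have d2 : HasDerivAt (fun s : ℝ => g (s * v x))
          ((1 + 2 * g (s * v x) ^ 2) ^ (-(1 / 2) : ℝ) * v x) s :=
        (hg (s * v x)).comp s d1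
      have d3 : HasDerivAt (fun y : ℝ => y ^ (1 - γ))
          ((1 - γ) * g (s * v x) ^ (1 - γ - 1)) (g (s * v x)) :=
        Real.hasDerivAt_rpow_const (Or.inl hgsv.ne')
      have d4 := (d3.comp s d2).const_mul (h x)
      refine d4.congr_deriv ?_
      rw [(hg (s * v x)).deriv, show (1 - γ - 1 : ℝ) = -γ by ring]
      ring
    -- the bound condition for the derivative
    have h_bound : ∀ᵐ x ∂μ, ∀ s ∈ Metric.ball t a,
        ‖(1 - γ) * (h x * g (s * v x) ^ (-γ) * deriv g (s * v x) * v x)‖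
          ≤ (γ - 1) * bnd x := by
      filter_upwards [hbnd] with x hx
      intro s hs
      rw [Real.norm_eq_abs, abs_mul, abs_of_neg (by linarith : (1 - γ : ℝ) < 0)]
      have := hx s hs
      nlinarith [abs_nonneg (h x * g (s * v x) ^ (-γ) * deriv g (s * v x) * v x)]
    have hev_pos : ∀ᶠ s in nhds t, 0 < s := eventually_gt_nhds ht
    have hderiv := hasDerivAt_integral_of_dominated_loc_of_deriv_le (Metric.ball_mem_nhds t ha)
      (hev_pos.mono fun s hs => meas1 s hs) hF_int
      (F' := fun s x => (1 - γ) * (h x * g (s * v x) ^ (-γ) * deriv g (s * v x) * v x))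
      (((meas2 t ht).const_mul (1 - γ)))
      h_bound (hbnd_int.const_mul (γ - 1)) h_diff
    constructor
    · have := hderiv.2
      rwa [MeasureTheory.integral_const_mul] at this
    · -- continuity at t
      refine continuousAt_of_dominated (bound := bnd)
        (hev_pos.mono fun s hs => meas2 s hs) ?_ hbnd_int ?_
      · filter_upwards [Metric.ball_mem_nhds t ha] with s hs
        filter_upwards [hbnd] with x hx
        rw [Real.norm_eq_abs]
        exact hx s hs
      · filter_upwards [hv_pos] with x hw
        have htv : 0 < t * v x := by positivity
        have hgtv : 0 < g (t * v x) := g_pos hg0 hg htv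
        have c0 : ContinuousAt (fun s : ℝ => s * v x) t :=
          (continuous_id.mul continuous_const).continuousAt
        have c1 : ContinuousAt (fun s : ℝ => g (s * v x)) t :=
          (g_cont hg).continuousAt.comp c0
        have c2 : ContinuousAt (fun s : ℝ => g (s * v x) ^ (-γ)) t :=
          c1.rpow_const (Or.inl hgtv.ne')
        have c3 : ContinuousAt (fun s : ℝ => deriv g (s * v x)) t :=
          hdg_cont.continuousAt.comp c0
        exact ((continuousAt_const.mul c2).mul c3).mul continuousAt_const
  constructor
  · exact fun t ht => (key t ht).1
  · intro t ht
    exact (continuousAt_const.mul (key t ht).2).continuousWithinAt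
end

section
/- Let p ∈ (0,1), let b : Ω → ℝ be essentially bounded and measurable, let a > 0 be real, and let v : Ω → ℝ be measurable with v(x) > 0 for a.e. x ∈ Ω, such that x ↦ |v(x)|^(p+1) is integrable and x ↦ h(x)·g(v(x))^(1−γ) is integrable on Ω. Then there exists t₀ > 0 such that a·t₀² = ∫_Ω h(x)·g(t₀·v(x))^(−γ)·g'(t₀·v(x))·t₀·v(x) dx + ∫_Ω b(x)·g(t₀·v(x))^p·g'(t₀·v(x))·t₀·v(x) dx; that is, t₀·v lies on the Nehari-type constraint set 𝒩₂ associated to the dual singular problem. -/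
open MeasureTheory

section gfacts
variable {g : ℝ → ℝ}

private lemma sqrt_one_le' (x : ℝ) : (1:ℝ) ≤ Real.sqrt (1 + 2 * x ^ 2) := by
  calc (1:ℝ) = Real.sqrt 1 := Real.sqrt_one.symm
    _ ≤ _ := Real.sqrt_le_sqrt (by nlinarith [sq_nonneg x])

private lemma sqrt_pos' (x : ℝ) : (0:ℝ) < Real.sqrt (1 + 2 * x ^ 2) :=
  Real.sqrt_pos.2 (by positivity)

variable (hg : ∀ t : ℝ, HasDerivAt g ((1 + 2 * g t ^ 2) ^ (-(1 / 2) : ℝ)) t)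
include hg

private lemma gderiv_eq (t : ℝ) : deriv g t = (Real.sqrt (1 + 2 * g t ^ 2))⁻¹ := by
  rw [(hg t).deriv, Real.rpow_neg (by positivity), Real.sqrt_eq_rpow]

private lemma gd_pos (t : ℝ) : 0 < deriv g t := by
  rw [gderiv_eq hg]
  have h1 := sqrt_one_le' (g t)
  positivity

private lemma gd_le_one (t : ℝ) : deriv g t ≤ 1 := by
  rw [gderiv_eq hg, inv_le_one_iff₀]
  right
  exact sqrt_one_le' (g t)

private lemma gdiff : Differentiable ℝ g := fun t => (hg t).differentiableAt

private lemma g_strictMono : StrictMono g := strictMono_of_deriv_pos (gd_pos hg)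

private lemma gdcont : Continuous (deriv g) := by
  have he : deriv g = fun s => (Real.sqrt (1 + 2 * g s ^ 2))⁻¹ := funext (gderiv_eq hg)
  rw [he]
  have hc : Continuous fun s => Real.sqrt (1 + 2 * g s ^ 2) :=
    Real.continuous_sqrt.comp
      (continuous_const.add (continuous_const.mul (((gdiff hg).continuous).pow 2)))
  exact hc.inv₀ fun x => (sqrt_pos' (g x)).ne'

variable (hg0 : g 0 = 0)
include hg0

private lemma g_pos_s17 {s : ℝ} (hs : 0 < s) : 0 < g s := by
  have := g_strictMono hg hs
  rwa [hg0] at this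

private lemma g_nonneg {s : ℝ} (hs : 0 ≤ s) : 0 ≤ g s := by
  have := (g_strictMono hg).monotone hs
  rwa [hg0] at this

private lemma g_le_self {s : ℝ} (hs : 0 ≤ s) : g s ≤ s := by
  have hmono : Monotone (fun y => y - g y) := by
    apply monotone_of_deriv_nonneg (fun x => ((hasDerivAt_id x).sub (hg x)).differentiableAt)
    intro x
    rw [((hasDerivAt_id x).sub (hg x)).deriv]
    have h1 := gd_le_one hg x
    have h2 := (hg x).deriv
    linarith [h2 ▸ h1]
  have := hmono hs
  simp only [hg0, sub_zero] at this
  linarith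

omit hg0

private lemma w_hasDerivAt (s : ℝ) :
    HasDerivAt (fun y => g y * Real.sqrt (1 + 2 * g y ^ 2))
      (1 + 2 * g s ^ 2 / (1 + 2 * g s ^ 2)) s := by
  have hu : HasDerivAt (fun y => 1 + 2 * g y ^ 2)
      (2 * ((2:ℕ) * g s ^ 1 * ((1 + 2 * g s ^ 2) ^ (-(1 / 2) : ℝ)))) s :=
    (((hg s).pow 2).const_mul 2).const_add 1
  have hsq : HasDerivAt (fun y => Real.sqrt (1 + 2 * g y ^ 2))
      ((2 * ((2:ℕ) * g s ^ 1 * ((1 + 2 * g s ^ 2) ^ (-(1 / 2) : ℝ)))) /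
        (2 * Real.sqrt (1 + 2 * g s ^ 2))) s :=
    hu.sqrt (by positivity)
  have h : HasDerivAt (fun y => g y * Real.sqrt (1 + 2 * g y ^ 2)) _ s := (hg s).mul hsq
  convert h using 1
  have hpos : (0:ℝ) < 1 + 2 * g s ^ 2 := by positivity
  rw [Real.rpow_neg hpos.le, Real.sqrt_eq_rpow] at *
  set r := (1 + 2 * g s ^ 2 : ℝ) ^ (1/2 : ℝ) with hr
  have hr0 : 0 < r := by rw [hr]; positivity
  have hsq2 : r ^ 2 = 1 + 2 * g s ^ 2 := by
    rw [hr, ← Real.rpow_natCast _ 2, ← Real.rpow_mul hpos.le]; norm_num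
  field_simp
  push_cast
  nlinarith [hsq2, hr0]

include hg0

private lemma w_lower {s : ℝ} (hs : 0 ≤ s) : s ≤ g s * Real.sqrt (1 + 2 * g s ^ 2) := by
  have hmono : Monotone (fun y => g y * Real.sqrt (1 + 2 * g y ^ 2) - y) := by
    apply monotone_of_deriv_nonneg
      (fun x => ((w_hasDerivAt hg x).sub (hasDerivAt_id x)).differentiableAt)
    intro x
    rw [((w_hasDerivAt hg x).sub (hasDerivAt_id x)).deriv]
    have h1 : (0:ℝ) < 1 + 2 * g x ^ 2 := by positivity
    have h2 : 0 ≤ 2 * g x ^ 2 / (1 + 2 * g x ^ 2) := by positivity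
    linarith
  have := hmono hs
  simp only [hg0, zero_mul, sub_zero, zero_sub, mul_zero] at this
  linarith

private lemma w_upper {s : ℝ} (hs : 0 ≤ s) : g s * Real.sqrt (1 + 2 * g s ^ 2) ≤ 2 * s := by
  have hmono : Monotone (fun y => 2 * y - g y * Real.sqrt (1 + 2 * g y ^ 2)) := by
    apply monotone_of_deriv_nonneg
      (fun x => (((hasDerivAt_id x).const_mul 2).sub (w_hasDerivAt hg x)).differentiableAt)
    intro x
    rw [(((hasDerivAt_id x).const_mul 2).sub (w_hasDerivAt hg x)).deriv]
    have hpos : (0:ℝ) < 1 + 2 * g x ^ 2 := by positivity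
    have h2 : 2 * g x ^ 2 / (1 + 2 * g x ^ 2) ≤ 1 := by
      rw [div_le_one hpos]; linarith
    linarith
  have := hmono hs
  simp only [hg0, zero_mul, mul_zero, sub_zero] at this
  linarith

private lemma sgd_le_g {s : ℝ} (hs : 0 ≤ s) : s * deriv g s ≤ g s := by
  rw [gderiv_eq hg]
  have h1 := w_lower hg hg0 hs
  have h2 := sqrt_pos' (g s)
  calc s * (Real.sqrt (1 + 2 * g s ^ 2))⁻¹
      ≤ (g s * Real.sqrt (1 + 2 * g s ^ 2)) * (Real.sqrt (1 + 2 * g s ^ 2))⁻¹ :=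
        mul_le_mul_of_nonneg_right h1 (by positivity)
    _ = g s := by field_simp

private lemma g_le_two_sgd {s : ℝ} (hs : 0 ≤ s) : g s ≤ 2 * (s * deriv g s) := by
  rw [gderiv_eq hg]
  have h1 := w_upper hg hg0 hs
  have h2 := sqrt_pos' (g s)
  calc g s = (g s * Real.sqrt (1 + 2 * g s ^ 2)) * (Real.sqrt (1 + 2 * g s ^ 2))⁻¹ := by
        field_simp
    _ ≤ (2 * s) * (Real.sqrt (1 + 2 * g s ^ 2))⁻¹ :=
        mul_le_mul_of_nonneg_right h1 (by positivity)
    _ = 2 * (s * (Real.sqrt (1 + 2 * g s ^ 2))⁻¹) := by ring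

private lemma gd_anti_s17 {x y : ℝ} (hx : 0 ≤ x) (hxy : x ≤ y) : deriv g y ≤ deriv g x := by
  rw [gderiv_eq hg, gderiv_eq hg]
  have hgx : 0 ≤ g x := g_nonneg hg hg0 hx
  have hgxy : g x ≤ g y := (g_strictMono hg).monotone hxy
  have h2 := sqrt_pos' (g x)
  apply inv_anti₀ h2
  apply Real.sqrt_le_sqrt
  nlinarith

private lemma g_scale {t : ℝ} (ht0 : 0 < t) (ht1 : t ≤ 1) {s : ℝ} (hs : 0 ≤ s) :
    t * g s ≤ g (t * s) := by
  have hψd : ∀ y : ℝ, HasDerivAt (fun y => g (t * y) - t * g y)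
      (deriv g (t * y) * (t * 1) - t * deriv g y) y := by
    intro y
    have h1 : HasDerivAt (fun y => g (t * y)) (deriv g (t * y) * (t * 1)) y := by
      have := (hg (t * y)).comp y ((hasDerivAt_id y).const_mul t)
      rw [(hg (t * y)).deriv]
      exact this
    have h2 : HasDerivAt (fun y => t * g y) (t * deriv g y) y := by
      rw [(hg y).deriv]; exact (hg y).const_mul t
    exact h1.sub h2
  have hmono : MonotoneOn (fun y => g (t * y) - t * g y) (Set.Ici 0) := by
    apply monotoneOn_of_deriv_nonneg (convex_Ici 0)
      (fun y _ => ((hψd y).differentiableAt).continuousAt.continuousWithinAt)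
      (fun y _ => ((hψd y).differentiableAt).differentiableWithinAt)
    intro y hy
    rw [interior_Ici] at hy
    rw [(hψd y).deriv]
    have hy0 : 0 < y := Set.mem_Ioi.mp hy
    have h1 : deriv g y ≤ deriv g (t * y) := by
      apply gd_anti_s17 hg hg0 (mul_nonneg ht0.le hy0.le)
      nlinarith
    nlinarith [le_of_lt ht0]
  have := hmono Set.self_mem_Ici (Set.mem_Ici.2 hs) hs
  simp only [mul_zero, hg0] at this
  linarith

end gfacts

section pt2

variable {g : ℝ → ℝ}
  (hg : ∀ t : ℝ, HasDerivAt g ((1 + 2 * g t ^ 2) ^ (-(1 / 2) : ℝ)) t)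
  (hg0 : g 0 = 0)


include hg hg0 in
lemma ptP {γ c s : ℝ} (hc : 0 < c) (hs : 0 < s) :
    (1/2) * (c * g s ^ (1-γ)) ≤ c * g s ^ (-γ) * deriv g s * s ∧
      c * g s ^ (-γ) * deriv g s * s ≤ c * g s ^ (1-γ) := by
  have hgs : 0 < g s := g_pos_s17 hg hg0 hs
  have hA : 0 < g s ^ (-γ) := Real.rpow_pos_of_pos hgs _
  have h1 : s * deriv g s ≤ g s := sgd_le_g hg hg0 hs.le
  have h2 : g s ≤ 2 * (s * deriv g s) := g_le_two_sgd hg hg0 hs.le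
  have hAB : g s ^ (1-γ) = g s ^ (-γ) * g s := by
    rw [show (1-γ) = -γ + 1 by ring, Real.rpow_add_one hgs.ne']
  constructor
  · calc (1/2) * (c * g s ^ (1-γ)) = c * (g s ^ (-γ) * ((1/2) * g s)) := by rw [hAB]; ring
      _ ≤ c * (g s ^ (-γ) * (s * deriv g s)) := by
          apply mul_le_mul_of_nonneg_left _ hc.le
          apply mul_le_mul_of_nonneg_left _ hA.le
          linarith
      _ = c * g s ^ (-γ) * deriv g s * s := by ring
  · calc c * g s ^ (-γ) * deriv g s * s = c * (g s ^ (-γ) * (s * deriv g s)) := by ring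
      _ ≤ c * (g s ^ (-γ) * g s) :=
          mul_le_mul_of_nonneg_left (mul_le_mul_of_nonneg_left h1 hA.le) hc.le
      _ = c * g s ^ (1-γ) := by rw [hAB]

include hg hg0 in
lemma ptP_pos {γ c s : ℝ} (hc : 0 < c) (hs : 0 < s) :
    0 < c * g s ^ (-γ) * deriv g s * s :=
  mul_pos (mul_pos (mul_pos hc (Real.rpow_pos_of_pos (g_pos_s17 hg hg0 hs) _))
    (gd_pos hg _)) hs

include hg hg0 in
lemma ptQ {p bb M t vv : ℝ} (hp0 : 0 ≤ p) (hbM : |bb| ≤ M) (ht : 0 < t) (hv : 0 < vv) :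
    |bb * g (t * vv) ^ p * deriv g (t * vv) * (t * vv)| ≤ M * t ^ (p+1) * |vv| ^ (p+1) := by
  have hs : 0 < t * vv := mul_pos ht hv
  have hgs0 : 0 ≤ g (t * vv) := g_nonneg hg hg0 hs.le
  have hgp : 0 ≤ g (t * vv) ^ p := Real.rpow_nonneg hgs0 _
  have hd : 0 < deriv g (t * vv) := gd_pos hg _
  have habs : |bb * g (t * vv) ^ p * deriv g (t * vv) * (t * vv)|
      = |bb| * (g (t * vv) ^ p * (deriv g (t * vv) * (t * vv))) := by
    rw [abs_mul, abs_mul, abs_mul, abs_of_nonneg hgp, abs_of_nonneg hd.le,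
      abs_of_nonneg hs.le]
    ring
  rw [habs]
  have hb1 : g (t * vv) ^ p ≤ (t * vv) ^ p :=
    Real.rpow_le_rpow hgs0 (g_le_self hg hg0 hs.le) hp0
  have hb2 : deriv g (t * vv) * (t * vv) ≤ t * vv := by
    nlinarith [gd_le_one hg (t * vv)]
  have hM0 : 0 ≤ M := le_trans (abs_nonneg bb) hbM
  calc |bb| * (g (t * vv) ^ p * (deriv g (t * vv) * (t * vv)))
      ≤ M * ((t * vv) ^ p * (t * vv)) := by
        apply mul_le_mul hbM _ (mul_nonneg hgp (mul_nonneg hd.le hs.le)) hM0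
        exact mul_le_mul hb1 hb2 (mul_nonneg hd.le hs.le) (Real.rpow_nonneg hs.le _)
    _ = M * (t * vv) ^ (p+1) := by rw [Real.rpow_add_one hs.ne']
    _ = M * (t ^ (p+1) * vv ^ (p+1)) := by rw [Real.mul_rpow ht.le hv.le]
    _ = M * t ^ (p+1) * |vv| ^ (p+1) := by rw [abs_of_pos hv]; ring

include hg hg0 in
lemma ptC {γ ε t vv : ℝ} (hγ : 1 < γ) (hε : 0 < ε) (hε1 : ε ≤ 1) (htε : ε ≤ t)
    (hv : 0 < vv) : g (t * vv) ^ (1-γ) ≤ ε ^ (1-γ) * g vv ^ (1-γ) := by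
  have h1 : ε * g vv ≤ g (ε * vv) := g_scale hg hg0 hε hε1 hv.le
  have h2 : g (ε * vv) ≤ g (t * vv) := (g_strictMono hg).monotone (by nlinarith)
  have hb : 0 < ε * g vv := mul_pos hε (g_pos_s17 hg hg0 hv)
  calc g (t * vv) ^ (1-γ) ≤ (ε * g vv) ^ (1-γ) :=
        Real.rpow_le_rpow_of_nonpos hb (h1.trans h2) (by linarith)
    _ = ε ^ (1-γ) * g vv ^ (1-γ) := Real.mul_rpow hε.le (g_nonneg hg hg0 hv.le)

include hg hg0 in
lemma ptD {γ t vv : ℝ} (hγ : 1 < γ) (ht0 : 0 < t) (ht1 : t ≤ 1) (hv : 0 < vv) :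
    g vv ^ (1-γ) ≤ g (t * vv) ^ (1-γ) :=
  Real.rpow_le_rpow_of_nonpos (g_pos_s17 hg hg0 (mul_pos ht0 hv))
    ((g_strictMono hg).monotone (by nlinarith)) (by linarith)

include hg hg0 in
lemma ptE {γ t vv : ℝ} (hγ : 1 < γ) (ht1 : 1 ≤ t) (hv : 0 < vv) :
    g (t * vv) ^ (1-γ) ≤ g vv ^ (1-γ) :=
  Real.rpow_le_rpow_of_nonpos (g_pos_s17 hg hg0 hv)
    ((g_strictMono hg).monotone (by nlinarith)) (by linarith)



variable {g : ℝ → ℝ}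


set_option maxHeartbeats 1000000 in
theorem aux_main {α : Type*} [MeasurableSpace α] (μ : Measure α) (hμ : μ ≠ 0)
    (γ : ℝ) (hγ : 1 < γ)
    (hg : ∀ t : ℝ, HasDerivAt g ((1 + 2 * g t ^ 2) ^ (-(1 / 2) : ℝ)) t)
    (hg0 : g 0 = 0)
    (h : α → ℝ) (hh_int : Integrable h μ) (hh_pos : ∀ᵐ x ∂μ, 0 < h x)
    (p : ℝ) (hp0 : 0 < p) (hp1 : p < 1)
    (b : α → ℝ) (hb_meas : AEStronglyMeasurable b μ)
    (M : ℝ) (hM0 : 0 ≤ M) (hbM : ∀ᵐ x ∂μ, |b x| ≤ M)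
    (a : ℝ) (ha : 0 < a)
    (v : α → ℝ) (hv_meas : AEMeasurable v μ) (hv_pos : ∀ᵐ x ∂μ, 0 < v x)
    (hv_intp : Integrable (fun x => |v x| ^ (p + 1)) μ)
    (hv_intg : Integrable (fun x => h x * g (v x) ^ (1 - γ)) μ) :
    ∃ t₀ : ℝ, 0 < t₀ ∧ a * t₀ ^ 2 =
      (∫ x, h x * g (t₀ * v x) ^ (-γ) * deriv g (t₀ * v x) * (t₀ * v x) ∂μ)
        + ∫ x, b x * g (t₀ * v x) ^ p * deriv g (t₀ * v x) * (t₀ * v x) ∂μ := by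
  set P : ℝ → α → ℝ := fun t x => h x * g (t * v x) ^ (-γ) * deriv g (t * v x) * (t * v x)
    with hP
  set Q : ℝ → α → ℝ := fun t x => b x * g (t * v x) ^ p * deriv g (t * v x) * (t * v x)
    with hQ
  -- measurability
  have hPm : ∀ t : ℝ, AEStronglyMeasurable (P t) μ := by
    intro t
    have hvm : AEMeasurable (fun x => t * v x) μ := hv_meas.const_mul t
    have h1 : AEMeasurable (fun x => g (t * v x)) μ :=
      (gdiff hg).continuous.measurable.comp_aemeasurable hvm
    have hr : Measurable fun y : ℝ => y ^ (-γ) := by measurability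
    have h2 : AEMeasurable (fun x => g (t * v x) ^ (-γ)) μ := hr.comp_aemeasurable h1
    have h3 : AEMeasurable (fun x => deriv g (t * v x)) μ :=
      (gdcont hg).measurable.comp_aemeasurable hvm
    exact (((hh_int.1.aemeasurable.mul h2).mul h3).mul hvm).aestronglyMeasurable
  have hQm : ∀ t : ℝ, AEStronglyMeasurable (Q t) μ := by
    intro t
    have hvm : AEMeasurable (fun x => t * v x) μ := hv_meas.const_mul t
    have h1 : AEMeasurable (fun x => g (t * v x)) μ :=
      (gdiff hg).continuous.measurable.comp_aemeasurable hvm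
    have hr : Measurable fun y : ℝ => y ^ p := by measurability
    have h2 : AEMeasurable (fun x => g (t * v x) ^ p) μ := hr.comp_aemeasurable h1
    have h3 : AEMeasurable (fun x => deriv g (t * v x)) μ :=
      (gdcont hg).measurable.comp_aemeasurable hvm
    exact (((hb_meas.aemeasurable.mul h2).mul h3).mul hvm).aestronglyMeasurable
  -- integrability
  have hPint : ∀ ε t : ℝ, 0 < ε → ε ≤ 1 → ε ≤ t → Integrable (P t) μ := by
    intro ε t hε hε1 hεt
    apply Integrable.mono' (hv_intg.const_mul (ε ^ (1-γ))) (hPm t)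
    filter_upwards [hh_pos, hv_pos] with x hx hvx
    have ht0 : 0 < t := lt_of_lt_of_le hε hεt
    have hs : 0 < t * v x := mul_pos ht0 hvx
    rw [Real.norm_eq_abs, abs_of_nonneg (ptP_pos hg hg0 hx hs).le]
    calc P t x ≤ h x * g (t * v x) ^ (1-γ) := (ptP hg hg0 hx hs).2
      _ ≤ h x * (ε ^ (1-γ) * g (v x) ^ (1-γ)) :=
          mul_le_mul_of_nonneg_left (ptC hg hg0 hγ hε hε1 hεt hvx) hx.le
      _ = ε ^ (1-γ) * (h x * g (v x) ^ (1-γ)) := by ring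
  have hQint : ∀ T t : ℝ, 0 < t → t ≤ T → Integrable (Q t) μ := by
    intro T t ht hT
    apply Integrable.mono' (hv_intp.const_mul (M * T ^ (p+1))) (hQm t)
    filter_upwards [hbM, hv_pos] with x hbx hvx
    rw [Real.norm_eq_abs]
    refine (ptQ hg hg0 hp0.le hbx ht hvx).trans ?_
    have h1 : t ^ (p+1) ≤ T ^ (p+1) := Real.rpow_le_rpow ht.le hT (by linarith)
    calc M * t ^ (p+1) * |v x| ^ (p+1) ≤ M * T ^ (p+1) * |v x| ^ (p+1) :=
          mul_le_mul_of_nonneg_right (mul_le_mul_of_nonneg_left h1 hM0)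
            (Real.rpow_nonneg (abs_nonneg _) _)
      _ = M * T ^ (p+1) * |v x| ^ (p+1) := rfl
  -- positivity of C1
  have hDnn : 0 ≤ᵐ[μ] fun x => h x * g (v x) ^ (1-γ) := by
    filter_upwards [hh_pos, hv_pos] with x hx hvx
    exact (mul_pos hx (Real.rpow_pos_of_pos (g_pos_s17 hg hg0 hvx) _)).le
  set C1 := ∫ x, h x * g (v x) ^ (1-γ) ∂μ with hC1
  set C2 := ∫ x, |v x| ^ (p+1) ∂μ with hC2
  have hC1pos : 0 < C1 := by
    rw [hC1, integral_pos_iff_support_of_nonneg_ae hDnn hv_intg]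
    have hsub : ∀ᵐ x ∂μ, x ∈ Function.support fun x => h x * g (v x) ^ (1-γ) := by
      filter_upwards [hh_pos, hv_pos] with x hx hvx
      exact (mul_pos hx (Real.rpow_pos_of_pos (g_pos_s17 hg hg0 hvx) _)).ne'
    rw [Filter.eventually_iff, mem_ae_iff] at hsub
    have huniv : μ Set.univ ≤ μ (Function.support fun x => h x * g (v x) ^ (1-γ))
        + μ {x | x ∈ Function.support fun x => h x * g (v x) ^ (1-γ)}ᶜ := by
      rw [← Set.union_compl_self {x | x ∈ Function.support fun x => h x * g (v x) ^ (1-γ)}]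
      exact measure_union_le _ _
    rw [hsub, add_zero] at huniv
    exact lt_of_lt_of_le (Measure.measure_univ_pos.mpr hμ) huniv
  have hC2nn : 0 ≤ C2 := integral_nonneg fun x => Real.rpow_nonneg (abs_nonneg _) _
  -- integral bounds
  have hI1low : ∀ t : ℝ, 0 < t → t ≤ 1 → C1 / 2 ≤ ∫ x, P t x ∂μ := by
    intro t ht ht1
    have hint : Integrable (P t) μ := hPint t t ht ht1 le_rfl
    have hmul : Integrable (fun x => (1/2 : ℝ) * (h x * g (v x) ^ (1-γ))) μ :=
      hv_intg.const_mul _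
    have hle := integral_mono_ae hmul hint ?_
    · rw [integral_const_mul, ← hC1] at hle
      linarith
    · filter_upwards [hh_pos, hv_pos] with x hx hvx
      have hs : 0 < t * v x := mul_pos ht hvx
      calc (1/2 : ℝ) * (h x * g (v x) ^ (1-γ))
          ≤ (1/2 : ℝ) * (h x * g (t * v x) ^ (1-γ)) := by
            apply mul_le_mul_of_nonneg_left
              (mul_le_mul_of_nonneg_left (ptD hg hg0 hγ ht ht1 hvx) hx.le) (by norm_num)
        _ ≤ P t x := (ptP hg hg0 hx hs).1
  have hI1high : ∀ t : ℝ, 1 ≤ t → (∫ x, P t x ∂μ) ≤ C1 := by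
    intro t ht
    have hint := hPint 1 t one_pos le_rfl ht
    apply integral_mono_ae hint hv_intg
    filter_upwards [hh_pos, hv_pos] with x hx hvx
    have hs : 0 < t * v x := mul_pos (lt_of_lt_of_le one_pos ht) hvx
    calc P t x ≤ h x * g (t * v x) ^ (1-γ) := (ptP hg hg0 hx hs).2
      _ ≤ h x * g (v x) ^ (1-γ) := mul_le_mul_of_nonneg_left (ptE hg hg0 hγ ht hvx) hx.le
  have hI2abs : ∀ t : ℝ, 0 < t → |∫ x, Q t x ∂μ| ≤ M * t ^ (p+1) * C2 := by
    intro t ht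
    have hbnd : Integrable (fun x => M * t ^ (p+1) * |v x| ^ (p+1)) μ := hv_intp.const_mul _
    have hae : ∀ᵐ x ∂μ, ‖Q t x‖ ≤ M * t ^ (p+1) * |v x| ^ (p+1) := by
      filter_upwards [hbM, hv_pos] with x hbx hvx
      rw [Real.norm_eq_abs]
      exact ptQ hg hg0 hp0.le hbx ht hvx
    have hle := norm_integral_le_of_norm_le hbnd hae
    rw [Real.norm_eq_abs] at hle
    rwa [integral_const_mul] at hle
  -- the function F
  set F : ℝ → ℝ := fun t => a * t ^ 2 - (∫ x, P t x ∂μ) - ∫ x, Q t x ∂μ with hF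
  have hcont : ∀ ε T : ℝ, 0 < ε → ε ≤ 1 → 1 ≤ T → ContinuousOn F (Set.Icc ε T) := by
    intro ε T hε hε1 hT t₀ ht₀
    obtain ⟨htl, htr⟩ := ht₀
    have ht₀pos : 0 < t₀ := lt_of_lt_of_le hε htl
    apply ContinuousAt.continuousWithinAt
    have hc1 : ContinuousAt (fun t => ∫ x, P t x ∂μ) t₀ := by
      apply continuousAt_of_dominated (bound := fun x => (ε/2) ^ (1-γ) * (h x * g (v x) ^ (1-γ)))
      · exact Filter.Eventually.of_forall hPm
      · have hmem : t₀ ∈ Set.Ioi (ε/2) := by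
          simp only [Set.mem_Ioi]; linarith
        filter_upwards [isOpen_Ioi.mem_nhds hmem] with t htmem
        filter_upwards [hh_pos, hv_pos] with x hx hvx
        have hε2 : 0 < ε/2 := by linarith
        have htε : ε/2 ≤ t := le_of_lt htmem
        have ht0 : 0 < t := lt_of_lt_of_le hε2 htε
        have hs : 0 < t * v x := mul_pos ht0 hvx
        rw [Real.norm_eq_abs, abs_of_nonneg (ptP_pos hg hg0 hx hs).le]
        calc P t x ≤ h x * g (t * v x) ^ (1-γ) := (ptP hg hg0 hx hs).2
          _ ≤ h x * ((ε/2) ^ (1-γ) * g (v x) ^ (1-γ)) :=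
              mul_le_mul_of_nonneg_left (ptC hg hg0 hγ hε2 (by linarith) htε hvx) hx.le
          _ = (ε/2) ^ (1-γ) * (h x * g (v x) ^ (1-γ)) := by ring
      · exact hv_intg.const_mul _
      · filter_upwards [hh_pos, hv_pos] with x hx hvx
        have hc_inner : Continuous fun t : ℝ => t * v x := continuous_id.mul continuous_const
        have hg_c : Continuous fun t : ℝ => g (t * v x) :=
          (gdiff hg).continuous.comp hc_inner
        have hgd_c : Continuous fun t : ℝ => deriv g (t * v x) := (gdcont hg).comp hc_inner
        have hne : g (t₀ * v x) ≠ 0 := (g_pos_s17 hg hg0 (mul_pos ht₀pos hvx)).ne'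
        have hrp : ContinuousAt (fun t : ℝ => g (t * v x) ^ (-γ)) t₀ :=
          (hg_c.continuousAt).rpow_const (Or.inl hne)
        exact ((continuousAt_const.mul hrp).mul hgd_c.continuousAt).mul hc_inner.continuousAt
    have hc2 : ContinuousAt (fun t => ∫ x, Q t x ∂μ) t₀ := by
      apply continuousAt_of_dominated (bound := fun x => M * (T+1) ^ (p+1) * |v x| ^ (p+1))
      · exact Filter.Eventually.of_forall hQm
      · have hmem : t₀ ∈ Set.Ioo 0 (T+1) := ⟨ht₀pos, by linarith⟩
        filter_upwards [isOpen_Ioo.mem_nhds hmem] with t htmem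
        filter_upwards [hbM, hv_pos] with x hbx hvx
        obtain ⟨ht0, htT⟩ := htmem
        rw [Real.norm_eq_abs]
        refine (ptQ hg hg0 hp0.le hbx ht0 hvx).trans ?_
        have h1 : t ^ (p+1) ≤ (T+1) ^ (p+1) := Real.rpow_le_rpow ht0.le htT.le (by linarith)
        exact mul_le_mul_of_nonneg_right (mul_le_mul_of_nonneg_left h1 hM0)
          (Real.rpow_nonneg (abs_nonneg _) _)
      · exact hv_intp.const_mul _
      · filter_upwards [hv_pos] with x hvx
        have hc_inner : Continuous fun t : ℝ => t * v x := continuous_id.mul continuous_const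
        have hg_c : Continuous fun t : ℝ => g (t * v x) :=
          (gdiff hg).continuous.comp hc_inner
        have hgd_c : Continuous fun t : ℝ => deriv g (t * v x) := (gdcont hg).comp hc_inner
        have hrp : ContinuousAt (fun t : ℝ => g (t * v x) ^ p) t₀ :=
          (hg_c.continuousAt).rpow_const (Or.inr hp0.le)
        exact ((continuousAt_const.mul hrp).mul hgd_c.continuousAt).mul hc_inner.continuousAt
    have hsq : ContinuousAt (fun t : ℝ => a * t ^ 2) t₀ :=
      (continuous_const.mul (continuous_pow 2)).continuousAt
    exact (hsq.sub hc1).sub hc2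
  -- choice of small ε
  have hMC2 : 0 ≤ M * C2 := mul_nonneg hM0 hC2nn
  set K := a + M * C2 + 1 with hKdef
  have hKpos : 0 < K := by linarith
  set δ := (C1 / (4 * K)) ^ ((1:ℝ) / (p+1)) with hδdef
  have hδpos : 0 < δ := Real.rpow_pos_of_pos (by positivity) _
  set ε := min 1 δ with hεdef
  have hεpos : 0 < ε := lt_min one_pos hδpos
  have hε1 : ε ≤ 1 := min_le_left _ _
  have hεK : K * ε ^ (p+1) ≤ C1 / 4 := by
    have h1 : ε ^ (p+1) ≤ δ ^ (p+1) :=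
      Real.rpow_le_rpow hεpos.le (min_le_right _ _) (by linarith)
    have h2 : δ ^ (p+1) = C1 / (4 * K) := by
      rw [hδdef, ← Real.rpow_mul (by positivity), one_div_mul_cancel (by linarith : p+1 ≠ 0),
        Real.rpow_one]
    calc K * ε ^ (p+1) ≤ K * (C1 / (4 * K)) :=
          mul_le_mul_of_nonneg_left (h1.trans h2.le) hKpos.le
      _ = C1 / 4 := by field_simp
  have hFε : F ε < 0 := by
    have hI1 := hI1low ε hεpos hε1
    have hI2 := hI2abs ε hεpos
    have hI2' := (abs_le.mp hI2).1
    have hεE : 0 ≤ ε ^ (p+1) := Real.rpow_nonneg hεpos.le _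
    have hεsq : a * ε ^ 2 ≤ a * ε ^ (p+1) := by
      have h1 : ε ^ (2:ℝ) ≤ ε ^ (p+1) :=
        Real.rpow_le_rpow_of_exponent_ge hεpos hε1 (by linarith)
      have h2 : ε ^ (2:ℝ) = ε ^ 2 := by
        rw [← Real.rpow_natCast ε 2]; norm_num
      rw [← h2] at *
      exact mul_le_mul_of_nonneg_left h1 ha.le
    have hrearr : M * ε ^ (p+1) * C2 = M * C2 * ε ^ (p+1) := by ring
    rw [hF]
    simp only
    nlinarith [hεK, hC1pos]
  -- choice of large T
  set X := (M * C2 + C1) / a + 1 with hXdef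
  have hX1 : 1 ≤ X := by
    have h1 : 0 ≤ (M * C2 + C1) / a := div_nonneg (by linarith) ha.le
    rw [hXdef]; linarith
  have hXpos : 0 < X := lt_of_lt_of_le one_pos hX1
  set T := X ^ ((1:ℝ) / (1-p)) with hTdef
  have hT1 : 1 ≤ T := by
    rw [hTdef]
    have h0 : (0:ℝ) ≤ (1:ℝ)/(1-p) := le_of_lt (div_pos one_pos (by linarith))
    have := Real.rpow_le_rpow_of_exponent_le hX1 h0
    rwa [Real.rpow_zero] at this
  have hTpos : 0 < T := lt_of_lt_of_le one_pos hT1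
  have hTX : T ^ (1-p) = X := by
    rw [hTdef, ← Real.rpow_mul hXpos.le, one_div_mul_cancel (by linarith : 1-p ≠ 0),
      Real.rpow_one]
  have hFT : 0 < F T := by
    have hI1 := hI1high T hT1
    have hI2 := hI2abs T hTpos
    have hI2' := (abs_le.mp hI2).2
    have hTp1 : 1 ≤ T ^ (p+1) := by
      have := Real.rpow_le_rpow_of_exponent_le hT1 (show (0:ℝ) ≤ p+1 by linarith)
      rwa [Real.rpow_zero] at this
    have hsplit : T ^ (2:ℝ) = T ^ (p+1) * T ^ (1-p) := by
      rw [← Real.rpow_add hTpos]; ring_nf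
    have hcast : T ^ (2:ℝ) = T ^ 2 := by rw [← Real.rpow_natCast T 2]; norm_num
    have e1 : a * T ^ 2 = T ^ (p+1) * (a * X) := by
      rw [← hcast, hsplit, hTX]; ring
    have e2 : a * X = M * C2 + C1 + a := by
      rw [hXdef]; field_simp
    rw [hF]
    simp only
    nlinarith [hTp1, hC1pos, ha, e1, e2, hMC2]
  -- intermediate value theorem
  have hεT : ε ≤ T := le_trans hε1 hT1
  have hFc := hcont ε T hεpos hε1 hT1
  have hmem : (0:ℝ) ∈ Set.Icc (F ε) (F T) := ⟨hFε.le, hFT.le⟩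
  obtain ⟨t₀, ht₀mem, ht₀⟩ := intermediate_value_Icc hεT hFc hmem
  refine ⟨t₀, lt_of_lt_of_le hεpos ht₀mem.1, ?_⟩
  have hzero : a * t₀ ^ 2 - (∫ x, P t₀ x ∂μ) - (∫ x, Q t₀ x ∂μ) = 0 := ht₀
  have hPeq : (∫ x, P t₀ x ∂μ)
      = ∫ x, h x * g (t₀ * v x) ^ (-γ) * deriv g (t₀ * v x) * (t₀ * v x) ∂μ := rfl
  have hQeq : (∫ x, Q t₀ x ∂μ)
      = ∫ x, b x * g (t₀ * v x) ^ p * deriv g (t₀ * v x) * (t₀ * v x) ∂μ := rfl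
  rw [← hPeq, ← hQeq]
  linarith

end pt2

/-- projection on the Nehari-type constraint set `𝒩₂`: there is
`t₀ > 0` with `a t₀² = ∫_Ω h g(t₀v)^(−γ) g'(t₀v) t₀ v + ∫_Ω b g(t₀v)^p g'(t₀v) t₀ v`. -/
theorem stmt_17 (N : ℕ) (hN : 3 ≤ N)
    (Ω : Set (EuclideanSpace ℝ (Fin N))) (hΩo : IsOpen Ω)
    (hΩb : Bornology.IsBounded Ω) (hΩpos : 0 < volume Ω)
    (γ : ℝ) (hγ : 1 < γ)
    (g : ℝ → ℝ) (hg0 : g 0 = 0)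
    (hg : ∀ t : ℝ, HasDerivAt g ((1 + 2 * g t ^ 2) ^ (-(1 / 2) : ℝ)) t)
    (h : EuclideanSpace ℝ (Fin N) → ℝ)
    (hh_int : IntegrableOn h Ω)
    (hh_pos : ∀ᵐ x ∂(volume.restrict Ω), 0 < h x)
    (p : ℝ) (hp0 : 0 < p) (hp1 : p < 1)
    (b : EuclideanSpace ℝ (Fin N) → ℝ)
    (hb : MemLp b ⊤ (volume.restrict Ω))
    (a : ℝ) (ha : 0 < a)
    (v : EuclideanSpace ℝ (Fin N) → ℝ)
    (hv_meas : AEMeasurable v (volume.restrict Ω))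
    (hv_pos : ∀ᵐ x ∂(volume.restrict Ω), 0 < v x)
    (hv_intp : IntegrableOn (fun x => |v x| ^ (p + 1)) Ω)
    (hv_intg : IntegrableOn (fun x => h x * g (v x) ^ (1 - γ)) Ω) :
    ∃ t₀ : ℝ, 0 < t₀ ∧
      a * t₀ ^ 2 =
        (∫ x in Ω, h x * g (t₀ * v x) ^ (-γ) * deriv g (t₀ * v x) * (t₀ * v x))
          + ∫ x in Ω, b x * g (t₀ * v x) ^ p * deriv g (t₀ * v x) * (t₀ * v x) := by
  have hμ : (volume.restrict Ω : Measure (EuclideanSpace ℝ (Fin N))) ≠ 0 := by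
    intro h0
    have h1 : volume.restrict Ω Set.univ = volume Ω := Measure.restrict_apply_univ Ω
    rw [h0] at h1
    simp only [Measure.coe_zero, Pi.zero_apply] at h1
    rw [← h1] at hΩpos
    exact lt_irrefl _ hΩpos
  have hbtop := hb.2
  rw [eLpNorm_exponent_top] at hbtop
  have hbM : ∀ᵐ x ∂(volume.restrict Ω),
      |b x| ≤ (eLpNormEssSup b (volume.restrict Ω)).toReal := by
    filter_upwards [ae_le_eLpNormEssSup (f := b) (μ := volume.restrict Ω)] with x hx
    have h2 := ENNReal.toReal_mono hbtop.ne hx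
    simpa [Real.norm_eq_abs] using h2
  exact aux_main (volume.restrict Ω) hμ γ hγ hg hg0 h hh_int hh_pos p hp0 hp1 b
    hb.1 _ ENNReal.toReal_nonneg hbM a ha v hv_meas hv_pos hv_intp hv_intg
end
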